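/- arXiv:1908.06915 — 2 statements merged into one kernel-verified Lean document; each statement's English description precedes it below -/
import Mathlib

section
/- Let A be a sectorial operator of angle θ ∈ (0,π) in a Banach space X₀ (possibly non-invertible) and σ ∈ (0,1). Define for λ in the open sector of angle π(1−σ) the operator I_σ(λ) = (sin(πσ)/σ) ∫₀^∞ s^σ / ((s^σ + λe^{iπσ})(s^σ + λe^{−iπσ})) (A+s)⁻¹ ds. Then λ ↦ I_σ(λ) is analytic on the open sector S°_{π(1−σ)}, and for λ, λ₀ in this sector one has I_σ(λ) − I_σ(λ₀) = (sin(πσ)/σ) ∫₀^∞ Θ(λ,λ₀,s)(A+s)⁻¹ ds, where Θ(λ,λ₀,s) = (λ₀−λ)s^σ(2s^σcos(πσ)+λ+λ₀) / ((s^σ+λe^{iπσ})(s^σ+λe^{−iπσ})(s^σ+λ₀e^{iπσ})(s^σ+λ₀e^{−iπσ})). -/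
open MeasureTheory Set
open scoped Real Topology

noncomputable section

universe u

variable {X : Type u} [NormedAddCommGroup X] [NormedSpace ℂ X]

/-- The closed sector of half-angle `θ` around the positive real axis (contains `0`). -/
def Sector (θ : ℝ) : Set ℂ := {z : ℂ | |z.arg| ≤ θ}

/-- `R` is the resolvent `(A + lam)⁻¹` of the (unbounded) operator `A`. -/
def IsResolventAt (A : X →ₗ.[ℂ] X) (lam : ℂ) (R : X →L[ℂ] X) : Prop :=
  (∀ x : X, ∃ h : R x ∈ A.domain, A ⟨R x, h⟩ + lam • R x = x) ∧
  (∀ u : A.domain, R (A u + lam • (u : X)) = (u : X))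

variable [CompleteSpace X]

/-- The integrand of `I_σ(λ)`. -/
def IsigKer (σ : ℝ) (lam : ℂ) (s : ℝ) : ℂ :=
  (((s ^ σ : ℝ)) : ℂ) /
    (((((s ^ σ : ℝ)) : ℂ) + lam * Complex.exp ((Real.pi * σ : ℂ) * Complex.I)) *
     ((((s ^ σ : ℝ)) : ℂ) + lam * Complex.exp (-(Real.pi * σ : ℂ) * Complex.I)))

/-- `I_σ(λ) = (sin(πσ)/σ) ∫₀^∞ s^σ/((s^σ+λe^{iπσ})(s^σ+λe^{-iπσ})) (A+s)⁻¹ ds`,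
expressed through the resolvent family `R` of `A`. -/
def Isig (R : ℂ → X →L[ℂ] X) (σ : ℝ) (lam : ℂ) : X →L[ℂ] X :=
  (((Real.sin (Real.pi * σ) / σ : ℝ)) : ℂ) •
    ∫ s in Ioi (0 : ℝ), IsigKer σ lam s • R (s : ℂ)

/-- The kernel `Θ(λ,λ₀,s)`. -/
def ThetaKer (σ : ℝ) (lam lam0 : ℂ) (s : ℝ) : ℂ :=
  ((lam0 - lam) * (((s ^ σ : ℝ)) : ℂ) *
      (2 * (((s ^ σ : ℝ)) : ℂ) * ((Real.cos (Real.pi * σ) : ℝ) : ℂ) + lam + lam0)) /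
    (((((s ^ σ : ℝ)) : ℂ) + lam * Complex.exp ((Real.pi * σ : ℂ) * Complex.I)) *
     ((((s ^ σ : ℝ)) : ℂ) + lam * Complex.exp (-(Real.pi * σ : ℂ) * Complex.I)) *
     ((((s ^ σ : ℝ)) : ℂ) + lam0 * Complex.exp ((Real.pi * σ : ℂ) * Complex.I)) *
     ((((s ^ σ : ℝ)) : ℂ) + lam0 * Complex.exp (-(Real.pi * σ : ℂ) * Complex.I)))

section Helpers

lemma exp_prod' (t : ℝ) :
    Complex.exp ((t:ℂ) * Complex.I) * Complex.exp (-(t:ℂ) * Complex.I) = 1 := by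
  rw [← Complex.exp_add, show (t:ℂ)*Complex.I + -(t:ℂ)*Complex.I = 0 by ring, Complex.exp_zero]

lemma exp_sum' (t : ℝ) :
    Complex.exp ((t:ℂ) * Complex.I) + Complex.exp (-(t:ℂ) * Complex.I)
      = 2 * ((Real.cos t : ℝ) : ℂ) := by
  rw [show (-(t:ℂ) * Complex.I) = (((-t : ℝ):ℂ) * Complex.I) by push_cast; ring,
    Complex.exp_mul_I, Complex.exp_mul_I, ← Complex.ofReal_cos, ← Complex.ofReal_sin,
    ← Complex.ofReal_cos, ← Complex.ofReal_sin, Real.cos_neg, Real.sin_neg]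
  push_cast
  ring

lemma qid' (t : ℝ) (x lam : ℂ) :
    (x + lam * Complex.exp ((t:ℂ) * Complex.I)) * (x + lam * Complex.exp (-(t:ℂ) * Complex.I))
      = x^2 + 2 * ((Real.cos t : ℝ) : ℂ) * x * lam + lam^2 := by
  have h1 := exp_prod' t
  have h2 := exp_sum' t
  linear_combination x * lam * h2 + lam^2 * h1

lemma keyNeZeroPos (t : ℝ) (ht0 : 0 < t) (htπ : t < Real.pi) {lam : ℂ}
    (harg : |lam.arg| < Real.pi - t) {x : ℝ} (hx : 0 < x) :
    (x : ℂ) + lam * Complex.exp ((t:ℂ) * Complex.I) ≠ 0 := by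
  intro h
  have h3 : lam = -(x:ℂ) * Complex.exp (-(t:ℂ) * Complex.I) := by
    linear_combination Complex.exp (-(t:ℂ) * Complex.I) * h - lam * exp_prod' t
  have h4 : lam = (x:ℂ) * (Complex.cos ((Real.pi - t : ℝ):ℂ) +
      Complex.sin ((Real.pi - t : ℝ):ℂ) * Complex.I) := by
    rw [h3, show (-(t:ℂ) * Complex.I) = (((-t : ℝ):ℂ) * Complex.I) by push_cast; ring,
      Complex.exp_mul_I, ← Complex.ofReal_cos, ← Complex.ofReal_sin,
      ← Complex.ofReal_cos, ← Complex.ofReal_sin, Real.cos_neg, Real.sin_neg,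
      Real.cos_pi_sub, Real.sin_pi_sub]
    push_cast
    ring
  have h5 : lam.arg = Real.pi - t := by
    rw [h4, Complex.arg_real_mul _ hx,
      Complex.arg_cos_add_sin_mul_I ⟨by linarith, by linarith⟩]
  rw [h5, abs_of_pos (by linarith)] at harg
  linarith

lemma keyNeZeroNeg (t : ℝ) (ht0 : 0 < t) (htπ : t < Real.pi) {lam : ℂ}
    (harg : |lam.arg| < Real.pi - t) {x : ℝ} (hx : 0 < x) :
    (x : ℂ) + lam * Complex.exp (-(t:ℂ) * Complex.I) ≠ 0 := by
  intro h
  have h3 : lam = -(x:ℂ) * Complex.exp ((t:ℂ) * Complex.I) := by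
    linear_combination Complex.exp ((t:ℂ) * Complex.I) * h - lam * exp_prod' t
  have h4 : lam = (x:ℂ) * (Complex.cos ((t - Real.pi : ℝ):ℂ) +
      Complex.sin ((t - Real.pi : ℝ):ℂ) * Complex.I) := by
    rw [h3, Complex.exp_mul_I, ← Complex.ofReal_cos, ← Complex.ofReal_sin,
      ← Complex.ofReal_cos, ← Complex.ofReal_sin, Real.cos_sub_pi, Real.sin_sub_pi]
    push_cast
    ring
  have h5 : lam.arg = t - Real.pi := by
    rw [h4, Complex.arg_real_mul _ hx,
      Complex.arg_cos_add_sin_mul_I ⟨by linarith, by linarith⟩]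
  rw [h5, abs_of_neg (by linarith)] at harg
  linarith

lemma keyRePos (t : ℝ) (ht0 : 0 < t) (htπ : t < Real.pi) {lam : ℂ} (hlam : lam ≠ 0)
    (harg : |lam.arg| < Real.pi - t) (E : ℂ)
    (hE : E = Complex.exp ((t:ℂ) * Complex.I) ∨ E = Complex.exp (-(t:ℂ) * Complex.I)) :
    0 < (lam * E).re + ‖lam‖ := by
  set w := lam * E with hw
  have hEnorm : ‖E‖ = 1 := by
    rcases hE with rfl | rfl
    · rw [Complex.norm_exp_ofReal_mul_I]
    · rw [show (-(t:ℂ) * Complex.I) = (((-t : ℝ):ℂ) * Complex.I) by push_cast; ring,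
        Complex.norm_exp_ofReal_mul_I]
  have hwnorm : ‖w‖ = ‖lam‖ := by rw [hw, norm_mul, hEnorm, mul_one]
  have hE0 : E ≠ 0 := by rcases hE with rfl | rfl <;> exact Complex.exp_ne_zero _
  have hw0 : w ≠ 0 := mul_ne_zero hlam hE0
  have hwpos : 0 < ‖w‖ := norm_pos_iff.mpr hw0
  have h1 : -‖w‖ ≤ w.re := by
    have h := Complex.abs_re_le_norm w
    linarith [(abs_le.mp h).1]
  rcases lt_or_eq_of_le h1 with h2 | h2
  · rw [← hwnorm]; linarith
  · exfalso
    have him : w.im = 0 := by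
      have hsq : ‖w‖^2 = w.re^2 + w.im^2 := by
        rw [Complex.sq_norm, Complex.normSq_apply]; ring
      nlinarith [sq_nonneg w.im]
    have hre : w = ((w.re : ℝ) : ℂ) := by
      apply Complex.ext <;> simp [him]
    have hzero : ((‖w‖ : ℝ) : ℂ) + lam * E = 0 := by
      have hwneg : w = -((‖w‖ : ℝ) : ℂ) := by
        apply Complex.ext
        · simpa using h2.symm
        · simpa using him
      rw [← hw]; linear_combination hwneg
    rcases hE with rfl | rfl
    · exact keyNeZeroPos t ht0 htπ harg hwpos hzero
    · exact keyNeZeroNeg t ht0 htπ harg hwpos hzero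

lemma norm_expI (t : ℝ) : ‖Complex.exp ((t:ℂ) * Complex.I)‖ = 1 := by
  rw [Complex.norm_exp_ofReal_mul_I]

lemma norm_expI' (t : ℝ) : ‖Complex.exp (-(t:ℂ) * Complex.I)‖ = 1 := by
  rw [show -(t:ℂ)*Complex.I = ((-t:ℝ):ℂ)*Complex.I by push_cast; ring]
  exact norm_expI (-t)

lemma theta_eq' (t : ℝ) (x lam lam0 : ℂ)
    (h1 : x + lam * Complex.exp ((t:ℂ)*Complex.I) ≠ 0)
    (h2 : x + lam * Complex.exp (-(t:ℂ)*Complex.I) ≠ 0)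
    (h3 : x + lam0 * Complex.exp ((t:ℂ)*Complex.I) ≠ 0)
    (h4 : x + lam0 * Complex.exp (-(t:ℂ)*Complex.I) ≠ 0) :
    ((lam0 - lam) * x * (2 * x * ((Real.cos t : ℝ):ℂ) + lam + lam0)) /
      ((x + lam * Complex.exp ((t:ℂ)*Complex.I)) * (x + lam * Complex.exp (-(t:ℂ)*Complex.I)) *
       (x + lam0 * Complex.exp ((t:ℂ)*Complex.I)) * (x + lam0 * Complex.exp (-(t:ℂ)*Complex.I)))
    = x / ((x + lam * Complex.exp ((t:ℂ)*Complex.I)) * (x + lam * Complex.exp (-(t:ℂ)*Complex.I)))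
      - x / ((x + lam0 * Complex.exp ((t:ℂ)*Complex.I)) * (x + lam0 * Complex.exp (-(t:ℂ)*Complex.I))) := by
  have q1 := qid' t x lam
  have q2 := qid' t x lam0
  have hq1 : x^2 + 2 * ((Real.cos t : ℝ):ℂ) * x * lam + lam^2 ≠ 0 := by
    rw [← q1]; exact mul_ne_zero h1 h2
  have hq2 : x^2 + 2 * ((Real.cos t : ℝ):ℂ) * x * lam0 + lam0^2 ≠ 0 := by
    rw [← q2]; exact mul_ne_zero h3 h4
  rw [show (x + lam * Complex.exp ((t:ℂ)*Complex.I)) * (x + lam * Complex.exp (-(t:ℂ)*Complex.I)) *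
       (x + lam0 * Complex.exp ((t:ℂ)*Complex.I)) * (x + lam0 * Complex.exp (-(t:ℂ)*Complex.I))
      = ((x + lam * Complex.exp ((t:ℂ)*Complex.I)) * (x + lam * Complex.exp (-(t:ℂ)*Complex.I))) *
        ((x + lam0 * Complex.exp ((t:ℂ)*Complex.I)) * (x + lam0 * Complex.exp (-(t:ℂ)*Complex.I))) from by ring,
    q1, q2]
  rw [div_sub_div _ _ hq1 hq2, div_eq_div_iff (mul_ne_zero hq1 hq2) (mul_ne_zero hq1 hq2)]
  ring

lemma coef_bound (δ m xr : ℝ) (lam cc Q Qm : ℂ)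
    (hδ0 : 0 < δ) (hδ1 : δ ≤ 1) (hm0 : 0 < m) (hx : 0 < xr) (hym : m ≤ ‖lam‖)
    (hcc : ‖cc‖ ≤ 1)
    (hnQ : (δ/2)*(xr+‖lam‖)^2 ≤ ‖Q‖) (hQ0 : Q ≠ 0)
    (hnQm : ‖Qm‖ ≤ (xr+m)^2) (hQm0 : Qm ≠ 0) :
    ‖(-((xr:ℂ) * (2*cc*(xr:ℂ) + 2*lam))) / Q^2‖ ≤ (8/(δ^2*m)) * ‖(xr:ℂ) / Qm‖ := by
  have hy0 : (0:ℝ) ≤ ‖lam‖ := norm_nonneg lam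
  have hQn0 : 0 < ‖Q‖ := norm_pos_iff.mpr hQ0
  have hQmn0 : 0 < ‖Qm‖ := norm_pos_iff.mpr hQm0
  have hnN : ‖2*cc*(xr:ℂ) + 2*lam‖ ≤ 2*(xr + ‖lam‖) := by
    calc ‖2*cc*(xr:ℂ) + 2*lam‖ ≤ ‖2*cc*(xr:ℂ)‖ + ‖2*lam‖ := norm_add_le _ _
      _ = 2*‖cc‖*xr + 2*‖lam‖ := by
          rw [norm_mul, norm_mul, norm_mul, Complex.norm_real, Real.norm_eq_abs, abs_of_pos hx]
          norm_num
      _ ≤ 2*(xr + ‖lam‖) := by nlinarith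
  rw [norm_div, norm_div, norm_neg, norm_mul, norm_pow, Complex.norm_real, Real.norm_eq_abs,
    abs_of_pos hx]
  have hrhs : (8/(δ^2*m)) * (xr / ‖Qm‖) = (8*xr) / (δ^2*m*‖Qm‖) := by field_simp
  rw [hrhs, div_le_div_iff₀ (by positivity) (by positivity)]
  have key : m*(xr+m)^2 ≤ (xr+‖lam‖)^3 := by
    calc m*(xr+m)^2 ≤ (xr+‖lam‖)*(xr+m)^2 :=
          mul_le_mul_of_nonneg_right (by linarith) (sq_nonneg _)
      _ ≤ (xr+‖lam‖)*(xr+‖lam‖)^2 := by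
          have h7 : (xr+m)^2 ≤ (xr+‖lam‖)^2 :=
            pow_le_pow_left₀ (by positivity) (by linarith) 2
          exact mul_le_mul_of_nonneg_left h7 (by positivity)
      _ = (xr+‖lam‖)^3 := by ring
  have hQ2 : ((δ/2)*(xr+‖lam‖)^2)^2 ≤ ‖Q‖^2 := pow_le_pow_left₀ (by positivity) hnQ 2
  calc xr*‖2*cc*(xr:ℂ)+2*lam‖*(δ^2*m*‖Qm‖)
      ≤ xr*(2*(xr+‖lam‖))*(δ^2*m*(xr+m)^2) := by
        apply mul_le_mul
        · exact mul_le_mul_of_nonneg_left hnN hx.le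
        · exact mul_le_mul_of_nonneg_left hnQm (by positivity)
        · positivity
        · positivity
    _ = 2*xr*δ^2*((xr+‖lam‖)*(m*(xr+m)^2)) := by ring
    _ ≤ 2*xr*δ^2*((xr+‖lam‖)*(xr+‖lam‖)^3) := by
        apply mul_le_mul_of_nonneg_left _ (by positivity)
        exact mul_le_mul_of_nonneg_left key (by positivity)
    _ = 8*((δ/2)*(xr+‖lam‖)^2)^2*xr := by ring
    _ ≤ 8*‖Q‖^2*xr := by
        apply mul_le_mul_of_nonneg_right _ hx.le
        exact mul_le_mul_of_nonneg_left hQ2 (by norm_num)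
    _ = 8*xr*‖Q‖^2 := by ring

end Helpers

set_option maxHeartbeats 2000000 in
/-- Let `A` be a (possibly non-invertible) sectorial operator of
angle `θ ∈ (0,π)` and `σ ∈ (0,1)`.  Then `λ ↦ I_σ(λ)` is analytic on the open
sector `S°_{π(1-σ)}`, and for `λ, λ₀` in this open sector
`I_σ(λ) - I_σ(λ₀) = (sin(πσ)/σ) ∫₀^∞ Θ(λ,λ₀,s)(A+s)⁻¹ ds`. -/
theorem statement5
    {X : Type u} [NormedAddCommGroup X] [NormedSpace ℂ X] [CompleteSpace X]
    (θ σ K : ℝ) (hθ0 : 0 < θ) (hθπ : θ < Real.pi) (hσ0 : 0 < σ) (hσ1 : σ < 1)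
    (hK : 1 ≤ K)
    (A : X →ₗ.[ℂ] X)
    (hclosed : IsClosed (A.graph : Set (X × X)))
    (hdense : Dense (A.domain : Set X))
    (hinj : ∀ u : A.domain, A u = 0 → (u : X) = 0)
    (R : ℂ → X →L[ℂ] X)
    (hA : ∀ lam ∈ Sector θ, lam ≠ 0 →
      IsResolventAt A lam (R lam) ∧ ‖lam‖ * ‖R lam‖ ≤ K)
    -- the integrals converge absolutely in L(X₀):
    (hint : ∀ lam : ℂ, lam ≠ 0 → |lam.arg| < Real.pi * (1 - σ) →
      IntegrableOn (fun s : ℝ => IsigKer σ lam s • R (s : ℂ)) (Ioi 0))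
    (hintΘ : ∀ lam lam0 : ℂ, lam ≠ 0 → |lam.arg| < Real.pi * (1 - σ) →
      lam0 ≠ 0 → |lam0.arg| < Real.pi * (1 - σ) →
      IntegrableOn (fun s : ℝ => ThetaKer σ lam lam0 s • R (s : ℂ)) (Ioi 0)) :
    (∀ lam : ℂ, lam ≠ 0 → |lam.arg| < Real.pi * (1 - σ) →
      AnalyticAt ℂ (Isig R σ) lam) ∧
    (∀ lam lam0 : ℂ, lam ≠ 0 → |lam.arg| < Real.pi * (1 - σ) →
      lam0 ≠ 0 → |lam0.arg| < Real.pi * (1 - σ) →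
      Isig R σ lam - Isig R σ lam0 =
        (((Real.sin (Real.pi * σ) / σ : ℝ)) : ℂ) •
          ∫ s in Ioi (0 : ℝ), ThetaKer σ lam lam0 s • R (s : ℂ)) := by
  have hπ := Real.pi_pos
  have ht0 : 0 < Real.pi * σ := by positivity
  have htπ : Real.pi * σ < Real.pi := by nlinarith
  set t := Real.pi * σ with ht
  have hpe : Real.pi * (1 - σ) = Real.pi - t := by rw [ht]; ring
  have hcast : ((Real.pi : ℂ) * (σ : ℂ)) = ((t : ℝ) : ℂ) := by rw [ht]; push_cast; ring
  set c : ℂ := ((Real.cos t : ℝ) : ℂ) with hcdef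
  -- nonvanishing of the quadratic denominator
  have hqne : ∀ (lam : ℂ), lam ≠ 0 → |lam.arg| < Real.pi * (1 - σ) → ∀ s : ℝ, s ∈ Ioi (0:ℝ) →
      ((((s ^ σ : ℝ)) : ℂ))^2 + 2*c*((((s ^ σ : ℝ)) : ℂ))*lam + lam^2 ≠ 0 := by
    intro lam h0 ha s hs
    have hx : (0:ℝ) < s ^ σ := Real.rpow_pos_of_pos hs σ
    rw [hcdef, ← qid' t]
    exact mul_ne_zero (keyNeZeroPos t ht0 htπ (hpe ▸ ha) hx)
      (keyNeZeroNeg t ht0 htπ (hpe ▸ ha) hx)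
  have hIK : ∀ (lam : ℂ) (s : ℝ), IsigKer σ lam s
      = ((((s ^ σ : ℝ)) : ℂ)) / (((((s ^ σ : ℝ)) : ℂ))^2 + 2*c*((((s ^ σ : ℝ)) : ℂ))*lam + lam^2) := by
    intro lam s
    unfold IsigKer
    rw [hcast, qid' t, hcdef]
  -- the open sector is a neighbourhood of its points
  have hSn : ∀ z : ℂ, z ≠ 0 → |z.arg| < Real.pi * (1 - σ) →
      {w : ℂ | w ≠ 0 ∧ |w.arg| < Real.pi * (1 - σ)} ∈ 𝓝 z := by
    intro z hz0 hza
    have hslit : z ∈ Complex.slitPlane := by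
      rw [Complex.mem_slitPlane_iff_arg]
      refine ⟨fun h => ?_, hz0⟩
      rw [h, abs_of_pos hπ] at hza
      nlinarith
    have hc1 : ContinuousAt (fun w : ℂ => |w.arg|) z :=
      (Complex.continuousAt_arg hslit).abs
    have h1 : {w : ℂ | |w.arg| < Real.pi * (1-σ)} ∈ 𝓝 z :=
      hc1.preimage_mem_nhds (Iio_mem_nhds hza)
    have h2 : {w : ℂ | w ≠ 0} ∈ 𝓝 z := isOpen_ne.mem_nhds hz0
    exact Filter.inter_mem h2 h1
  -- differentiability of the integral
  have hdiff : ∀ lam0 : ℂ, lam0 ≠ 0 → |lam0.arg| < Real.pi * (1 - σ) →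
      DifferentiableAt ℂ (fun lam => ∫ s in Ioi (0:ℝ), IsigKer σ lam s • R (s:ℂ)) lam0 := by
    intro lam0 h0 ha
    obtain ⟨ε1, hε1, hball⟩ := (Metric.nhds_basis_closedBall.mem_iff).mp (hSn lam0 h0 ha)
    have hl0 : 0 < ‖lam0‖ := norm_pos_iff.mpr h0
    set m : ℝ := ‖lam0‖ / 2 with hm
    have hm0 : 0 < m := by positivity
    set ε : ℝ := min ε1 m with hε
    have hε0 : 0 < ε := lt_min hε1 hm0
    have hKS : Metric.closedBall lam0 ε ⊆ {w : ℂ | w ≠ 0 ∧ |w.arg| < Real.pi * (1 - σ)} :=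
      (Metric.closedBall_subset_closedBall (min_le_left _ _)).trans hball
    have hKlow : ∀ z ∈ Metric.closedBall lam0 ε, m ≤ ‖z‖ := by
      intro z hz
      have h1 : ‖z - lam0‖ ≤ ε := mem_closedBall_iff_norm.mp hz
      have h2 : ε ≤ m := min_le_right _ _
      have h3 : ‖lam0‖ - ‖z‖ ≤ ‖z - lam0‖ := by
        rw [norm_sub_rev]; exact norm_sub_norm_le _ _
      have : m = ‖lam0‖ / 2 := hm
      linarith
    have hKup : ∀ z ∈ Metric.closedBall lam0 ε, ‖z‖ ≤ ‖lam0‖ + ε := by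
      intro z hz
      have h1 : ‖z - lam0‖ ≤ ε := mem_closedBall_iff_norm.mp hz
      have h2 : ‖z‖ - ‖lam0‖ ≤ ‖z - lam0‖ := norm_sub_norm_le _ _
      linarith
    set Ep := Complex.exp ((t:ℂ) * Complex.I) with hEp
    set En := Complex.exp (-(t:ℂ) * Complex.I) with hEn
    have hcont : Continuous fun z : ℂ => min ((z * Ep).re + ‖z‖) ((z * En).re + ‖z‖) := by
      apply Continuous.min <;>
        exact (Complex.continuous_re.comp (continuous_mul_right _)).add continuous_norm
    obtain ⟨z0, hz0K, hz0min⟩ := (isCompact_closedBall lam0 ε).exists_isMinOn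
      ⟨lam0, Metric.mem_closedBall_self hε0.le⟩ hcont.continuousOn
    set v : ℝ := min ((z0 * Ep).re + ‖z0‖) ((z0 * En).re + ‖z0‖) with hv
    have hz0S := hKS hz0K
    have hv0 : 0 < v := lt_min
      (keyRePos t ht0 htπ hz0S.1 (hpe ▸ hz0S.2) Ep (Or.inl hEp))
      (keyRePos t ht0 htπ hz0S.1 (hpe ▸ hz0S.2) En (Or.inr hEn))
    set Mb : ℝ := ‖lam0‖ + ε with hMb
    have hMb0 : 0 < Mb := by positivity
    set δ : ℝ := min 1 (v / Mb) with hδ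
    have hδ0 : 0 < δ := lt_min one_pos (by positivity)
    have hδ1 : δ ≤ 1 := min_le_left _ _
    have hRe : ∀ z ∈ Metric.closedBall lam0 ε, ∀ E : ℂ, (E = Ep ∨ E = En) →
        (δ - 1) * ‖z‖ ≤ (z * E).re := by
      intro z hz E hE
      have h1 : v ≤ (z*E).re + ‖z‖ := by
        rcases hE with rfl | rfl
        · exact le_trans (hz0min hz) (min_le_left _ _)
        · exact le_trans (hz0min hz) (min_le_right _ _)
      have h2 : δ * ‖z‖ ≤ v := by
        have h3 : δ ≤ v / Mb := min_le_right _ _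
        have h4 : ‖z‖ ≤ Mb := hKup z hz
        calc δ * ‖z‖ ≤ (v/Mb) * Mb := mul_le_mul h3 h4 (norm_nonneg z) (by positivity)
          _ = v := by field_simp
      nlinarith [norm_nonneg z]
    have hfac : ∀ z ∈ Metric.closedBall lam0 ε, ∀ E : ℂ, (E = Ep ∨ E = En) → ∀ x : ℝ, 0 ≤ x →
        (δ/2) * (x + ‖z‖)^2 ≤ ‖(x:ℂ) + z * E‖^2 := by
      intro z hz E hE x hx
      have hre := hRe z hz E hE
      have hEnorm : ‖E‖ = 1 := by
        rcases hE with rfl | rfl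
        · exact norm_expI t
        · exact norm_expI' t
      have hEn2 : ‖z*E‖ = ‖z‖ := by rw [norm_mul, hEnorm, mul_one]
      have hno : ‖(x:ℂ) + z*E‖^2 = (x + (z*E).re)^2 + (z*E).im^2 := by
        rw [Complex.sq_norm, Complex.normSq_apply]
        simp only [Complex.add_re, Complex.add_im, Complex.ofReal_re, Complex.ofReal_im,
          zero_add]
        ring
      have hzE2 : (z*E).re^2 + (z*E).im^2 = ‖z‖^2 := by
        rw [← hEn2, Complex.sq_norm, Complex.normSq_apply]; ring
      rw [hno]
      nlinarith [mul_nonneg (by linarith : (0:ℝ) ≤ 1 - δ/2) (sq_nonneg (x - ‖z‖)),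
        mul_nonneg (by linarith : (0:ℝ) ≤ 2*x) (by linarith : (0:ℝ) ≤ (z*E).re - (δ-1)*‖z‖)]
    have hq_lb : ∀ z ∈ Metric.closedBall lam0 ε, ∀ s : ℝ, s ∈ Ioi (0:ℝ) →
        (δ/2) * ((s^σ : ℝ) + ‖z‖)^2
          ≤ ‖((((s^σ:ℝ)):ℂ))^2 + 2*c*((((s^σ:ℝ)):ℂ))*z + z^2‖ := by
      intro z hz s hs
      have hx : (0:ℝ) < s^σ := Real.rpow_pos_of_pos hs σ
      rw [hcdef, ← qid' t, norm_mul]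
      have h1 := hfac z hz Ep (Or.inl hEp) _ hx.le
      have h2 := hfac z hz En (Or.inr hEn) _ hx.le
      have hc2 : (0:ℝ) ≤ (δ/2) * ((s^σ:ℝ) + ‖z‖)^2 := by positivity
      refine le_of_pow_le_pow_left₀ two_ne_zero (mul_nonneg (norm_nonneg _) (norm_nonneg _)) ?_
      calc ((δ/2) * ((s^σ:ℝ) + ‖z‖)^2)^2
          = ((δ/2) * ((s^σ:ℝ) + ‖z‖)^2) * ((δ/2) * ((s^σ:ℝ) + ‖z‖)^2) := sq _
        _ ≤ ‖(((s^σ:ℝ)):ℂ) + z * Ep‖^2 * ‖(((s^σ:ℝ)):ℂ) + z * En‖^2 :=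
            mul_le_mul h1 h2 hc2 (sq_nonneg _)
        _ = (‖(((s^σ:ℝ)):ℂ) + z * Ep‖ * ‖(((s^σ:ℝ)):ℂ) + z * En‖)^2 := by ring
    have hqm_ub : ∀ s : ℝ, s ∈ Ioi (0:ℝ) →
        ‖((((s^σ:ℝ)):ℂ))^2 + 2*c*((((s^σ:ℝ)):ℂ))*((m:ℝ):ℂ) + ((m:ℝ):ℂ)^2‖
          ≤ ((s^σ:ℝ) + m)^2 := by
      intro s hs
      have hx : (0:ℝ) < s^σ := Real.rpow_pos_of_pos hs σ
      rw [hcdef, ← qid' t, norm_mul]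
      have hb : ∀ E : ℂ, ‖E‖ = 1 → ‖(((s^σ:ℝ)):ℂ) + ((m:ℝ):ℂ)*E‖ ≤ (s^σ:ℝ) + m := by
        intro E hE
        calc ‖(((s^σ:ℝ)):ℂ) + ((m:ℝ):ℂ)*E‖ ≤ ‖(((s^σ:ℝ)):ℂ)‖ + ‖((m:ℝ):ℂ)*E‖ := norm_add_le _ _
          _ = (s^σ:ℝ) + m := by
              rw [norm_mul, hE, mul_one, Complex.norm_real, Complex.norm_real,
                Real.norm_eq_abs, Real.norm_eq_abs, abs_of_pos hx, abs_of_pos hm0]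
      calc ‖(((s^σ:ℝ)):ℂ) + ((m:ℝ):ℂ) * Ep‖ * ‖(((s^σ:ℝ)):ℂ) + ((m:ℝ):ℂ) * En‖
          ≤ ((s^σ:ℝ) + m) * ((s^σ:ℝ) + m) :=
            mul_le_mul (hb Ep (norm_expI t)) (hb En (norm_expI' t)) (norm_nonneg _)
              (by positivity)
        _ = ((s^σ:ℝ) + m)^2 := (sq _).symm
    -- m is in the sector
    have hmne : ((m:ℝ):ℂ) ≠ 0 := Complex.ofReal_ne_zero.mpr hm0.ne'
    have hmarg : |((m:ℝ):ℂ).arg| < Real.pi * (1 - σ) := by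
      rw [Complex.arg_ofReal_of_nonneg hm0.le, abs_zero]
      nlinarith
    have hintm := hint ((m:ℝ):ℂ) hmne hmarg
    -- the deriv kernel
    set F' : ℂ → ℝ → (X →L[ℂ] X) := fun lam s =>
      ((-(((((s^σ:ℝ)):ℂ)) * (2*c*((((s^σ:ℝ)):ℂ)) + 2*lam))) /
        (((((s^σ:ℝ)):ℂ))^2 + 2*c*((((s^σ:ℝ)):ℂ))*lam + lam^2)^2) • R (s:ℂ) with hF'
    set bound : ℝ → ℝ := fun s => (8/(δ^2*m)) * ‖IsigKer σ ((m:ℝ):ℂ) s • R (s:ℂ)‖ with hbd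
    have hF_meas : ∀ᶠ lam in 𝓝 lam0,
        AEStronglyMeasurable (fun s : ℝ => IsigKer σ lam s • R (s:ℂ)) (volume.restrict (Ioi 0)) :=
      Filter.eventually_of_mem (hSn lam0 h0 ha) (fun z hz => (hint z hz.1 hz.2).aestronglyMeasurable)
    have hgm : Measurable fun s : ℝ =>
        -(2*c*((((s^σ:ℝ)):ℂ)) + 2*lam0) /
          (((((s^σ:ℝ)):ℂ))^2 + 2*c*((((s^σ:ℝ)):ℂ))*lam0 + lam0^2) := by
      have h1 : Measurable fun s : ℝ => (((s^σ:ℝ)):ℂ) :=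
        Complex.measurable_ofReal.comp (Real.continuous_rpow_const hσ0.le).measurable
      fun_prop
    have hF'm : AEStronglyMeasurable (F' lam0) (volume.restrict (Ioi 0)) := by
      have h1 : AEStronglyMeasurable (fun s : ℝ =>
          (-(2*c*((((s^σ:ℝ)):ℂ)) + 2*lam0) /
            (((((s^σ:ℝ)):ℂ))^2 + 2*c*((((s^σ:ℝ)):ℂ))*lam0 + lam0^2)) •
            (IsigKer σ lam0 s • R (s:ℂ))) (volume.restrict (Ioi 0)) :=
        hgm.aestronglyMeasurable.smul (hint lam0 h0 ha).aestronglyMeasurable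
      refine h1.congr ?_
      filter_upwards [ae_restrict_mem measurableSet_Ioi] with s hs
      rw [hIK, smul_smul, hF']
      congr 1
      have hq := hqne lam0 h0 ha s hs
      field_simp
    have hbound : ∀ᵐ s ∂(volume.restrict (Ioi (0:ℝ))), ∀ lam ∈ Metric.ball lam0 ε,
        ‖F' lam s‖ ≤ bound s := by
      filter_upwards [ae_restrict_mem measurableSet_Ioi] with s hs lam hlam
      have hzK : lam ∈ Metric.closedBall lam0 ε := Metric.ball_subset_closedBall hlam
      have hzS := hKS hzK
      have hx : (0:ℝ) < s^σ := Real.rpow_pos_of_pos hs σ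
      have hym : m ≤ ‖lam‖ := hKlow lam hzK
      have hQ0 : (((((s^σ:ℝ)):ℂ))^2 + 2*c*((((s^σ:ℝ)):ℂ))*lam + lam^2) ≠ 0 :=
        hqne lam hzS.1 hzS.2 s hs
      have hQm0 : (((((s^σ:ℝ)):ℂ))^2 + 2*c*((((s^σ:ℝ)):ℂ))*((m:ℝ):ℂ) + ((m:ℝ):ℂ)^2) ≠ 0 :=
        hqne ((m:ℝ):ℂ) hmne hmarg s hs
      have hcc : ‖c‖ ≤ 1 := by
        rw [hcdef, Complex.norm_real, Real.norm_eq_abs]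
        exact Real.abs_cos_le_one t
      have hco := coef_bound δ m (s^σ) lam c _ _ hδ0 hδ1 hm0 hx hym hcc
        (hq_lb lam hzK s hs) hQ0 (hqm_ub s hs) hQm0
      simp only [hF', hbd]
      rw [← hIK ((m:ℝ):ℂ) s] at hco
      refine le_trans (le_of_eq (norm_smul (α := ℂ) (β := X →L[ℂ] X) _ _)) ?_
      refine le_trans (mul_le_mul_of_nonneg_right hco (norm_nonneg _)) ?_
      rw [mul_assoc]
      exact mul_le_mul_of_nonneg_left
        (le_of_eq (norm_smul (α := ℂ) (β := X →L[ℂ] X) _ _).symm) (by positivity)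
    have hbound_int : Integrable bound (volume.restrict (Ioi (0:ℝ))) :=
      (hintm.norm.const_mul _)
    have hdiffae : ∀ᵐ s ∂(volume.restrict (Ioi (0:ℝ))), ∀ lam ∈ Metric.ball lam0 ε,
        HasDerivAt (fun lam' => IsigKer σ lam' s • R (s:ℂ)) (F' lam s) lam := by
      filter_upwards [ae_restrict_mem measurableSet_Ioi] with s hs lam hlam
      have hzS := hKS (Metric.ball_subset_closedBall hlam)
      have hQ0 := hqne lam hzS.1 hzS.2 s hs
      have hfun : (fun lam' => IsigKer σ lam' s • R (s:ℂ))
          = fun lam' => (((((s^σ:ℝ)):ℂ)) /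
              (((((s^σ:ℝ)):ℂ))^2 + 2*c*((((s^σ:ℝ)):ℂ))*lam' + lam'^2)) • R (s:ℂ) := by
        funext lam'; rw [hIK]
      rw [hfun]
      have h1 : HasDerivAt (fun lam' : ℂ => lam'^2) (2*lam) lam := by
        simpa using hasDerivAt_pow 2 lam
      have h2 : HasDerivAt (fun lam' : ℂ =>
          ((((s^σ:ℝ)):ℂ))^2 + 2*c*((((s^σ:ℝ)):ℂ))*lam') (2*c*((((s^σ:ℝ)):ℂ))) lam := by
        simpa using ((hasDerivAt_id lam).const_mul (2*c*((((s^σ:ℝ)):ℂ)))).const_add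
          (((((s^σ:ℝ)):ℂ))^2)
      have hquad : HasDerivAt (fun lam' : ℂ =>
          ((((s^σ:ℝ)):ℂ))^2 + 2*c*((((s^σ:ℝ)):ℂ))*lam' + lam'^2)
          (2*c*((((s^σ:ℝ)):ℂ)) + 2*lam) lam := h2.add h1
      have hdiv := (hasDerivAt_const lam ((((s^σ:ℝ)):ℂ))).div hquad hQ0
      have hsm := hdiv.smul_const (R (s:ℂ))
      convert hsm using 2
      · rfl
      · rfl
      · rfl
      · rfl
      ring
    obtain ⟨-, hHD⟩ := hasDerivAt_integral_of_dominated_loc_of_deriv_le (Metric.ball_mem_nhds lam0 hε0) hF_meas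
      (hint lam0 h0 ha) hF'm hbound hbound_int hdiffae
    exact hHD.differentiableAt
  constructor
  · intro lam hl hla
    have hDO : DifferentiableOn ℂ (Isig R σ)
        {w : ℂ | w ≠ 0 ∧ |w.arg| < Real.pi * (1 - σ)} := by
      intro z hz
      exact ((hdiff z hz.1 hz.2).const_smul
        (((Real.sin t / σ : ℝ)) : ℂ)).differentiableWithinAt
    exact hDO.analyticAt (hSn lam hl hla)
  · intro lam lam0 h1 h2 h3 h4
    have hi := hint lam h1 h2
    have hi0 := hint lam0 h3 h4
    unfold Isig
    rw [← smul_sub, ← integral_sub hi hi0]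
    congr 1
    refine setIntegral_congr_fun measurableSet_Ioi (fun s hs => ?_)
    have hx : (0:ℝ) < s^σ := Real.rpow_pos_of_pos hs σ
    have e1 := keyNeZeroPos t ht0 htπ (hpe ▸ h2) hx
    have e2 := keyNeZeroNeg t ht0 htπ (hpe ▸ h2) hx
    have e3 := keyNeZeroPos t ht0 htπ (hpe ▸ h4) hx
    have e4 := keyNeZeroNeg t ht0 htπ (hpe ▸ h4) hx
    rw [← sub_smul]
    congr 1
    unfold ThetaKer IsigKer
    rw [hcast]
    exact (theta_eq' t _ lam lam0 e1 e2 e3 e4).symm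
end
end

section
/- Let X be a Banach space, A a closed linear operator in X, and κ_ρ (ρ > 0) a group of isometries of X that leaves D(A) invariant and satisfies the dilation relation λ − A = ρ² κ_ρ ((λ/ρ²) − A) κ_ρ⁻¹ for all λ ∈ ℂ and ρ > 0. If the spectrum of A is contained in ℂ\S°_φ for some φ ∈ (0,π), then −A is sectorial of angle θ for every θ ∈ [0,φ): indeed |λ|(λ−A)⁻¹ = κ_{√|λ|} ((λ/|λ|)−A)⁻¹ κ_{√|λ|}⁻¹ for λ ∈ S_θ\{0}, so that |λ|‖(λ−A)⁻¹‖ ≤ sup_{|μ|=1, μ∈S_θ} ‖(μ−A)⁻¹‖ < ∞. -/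
open MeasureTheory Set
open scoped Real Topology

noncomputable section

universe u

variable {X : Type u} [NormedAddCommGroup X] [NormedSpace ℂ X]

/-- `R` is the resolvent `(lam - A)⁻¹` of `A`: a two-sided inverse of `lam - A`. -/
def IsResolventAt' (A : X →ₗ.[ℂ] X) (lam : ℂ) (R : X →L[ℂ] X) : Prop :=
  (∀ x : X, ∃ h : R x ∈ A.domain, lam • R x - A ⟨R x, h⟩ = x) ∧
  (∀ u : A.domain, R (lam • (u : X) - A u) = (u : X))

lemma resolvent_unique' (A : X →ₗ.[ℂ] X) (lam : ℂ) {R R' : X →L[ℂ] X}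
    (hR : IsResolventAt' A lam R) (hR' : IsResolventAt' A lam R') : R = R' := by
  ext x
  obtain ⟨h, hx⟩ := hR'.1 x
  have h2 := hR.2 ⟨R' x, h⟩
  calc R x = R (lam • R' x - A ⟨R' x, h⟩) := by rw [hx]
    _ = R' x := h2

lemma resolvent_norm_le' {A : X →ₗ.[ℂ] X} {μ lam : ℂ} {R R' : X →L[ℂ] X}
    (hR : IsResolventAt' A μ R) (hR' : IsResolventAt' A lam R')
    (h : ‖lam - μ‖ * ‖R‖ ≤ 1 / 2) : ‖R'‖ ≤ 2 * ‖R‖ := by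
  refine R'.opNorm_le_bound (by positivity) fun x => ?_
  obtain ⟨hmem, hx⟩ := hR'.1 x
  have hA : (A ⟨R' x, hmem⟩ : X) = lam • R' x - x := eq_sub_iff_add_eq.mpr (by rw [add_comm, ← sub_eq_iff_eq_add.mp hx])
  have key : R (x + (μ - lam) • R' x) = R' x := by
    have h2 := hR.2 ⟨R' x, hmem⟩
    have he : x + (μ - lam) • R' x = μ • R' x - (A ⟨R' x, hmem⟩ : X) := by
      rw [hA, sub_smul]; abel
    rw [he]; exact h2
  have hb : ‖R' x‖ ≤ ‖R‖ * (‖x‖ + ‖μ - lam‖ * ‖R' x‖) :=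
    calc ‖R' x‖ = ‖R (x + (μ - lam) • R' x)‖ := by rw [key]
      _ ≤ ‖R‖ * ‖x + (μ - lam) • R' x‖ := R.le_opNorm _
      _ ≤ ‖R‖ * (‖x‖ + ‖μ - lam‖ * ‖R' x‖) := by
          gcongr
          exact le_trans (norm_add_le _ _) (by rw [norm_smul])
  rw [norm_sub_rev] at h
  nlinarith [norm_nonneg (R' x), norm_nonneg x, norm_nonneg R,
    mul_le_mul_of_nonneg_right h (norm_nonneg (R' x))]

def conjOp (e : X ≃ₗᵢ[ℂ] X) (R : X →L[ℂ] X) : X →L[ℂ] X :=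
  ((e.toContinuousLinearEquiv : X →L[ℂ] X).comp R).comp
    (e.symm.toContinuousLinearEquiv : X →L[ℂ] X)

lemma conjOp_apply (e : X ≃ₗᵢ[ℂ] X) (R : X →L[ℂ] X) (x : X) :
    conjOp e R x = e (R (e.symm x)) := rfl

lemma norm_conjOp_le (e : X ≃ₗᵢ[ℂ] X) (R : X →L[ℂ] X) : ‖conjOp e R‖ ≤ ‖R‖ := by
  refine (conjOp e R).opNorm_le_bound (norm_nonneg R) fun x => ?_
  rw [conjOp_apply, e.norm_map]
  calc ‖R (e.symm x)‖ ≤ ‖R‖ * ‖e.symm x‖ := R.le_opNorm _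
    _ = ‖R‖ * ‖x‖ := by rw [e.symm.norm_map]

lemma mem_sector_iff_cos {θ : ℝ} (hθ0 : 0 ≤ θ) (hθπ : θ ≤ Real.pi) {z : ℂ}
    (hz : ‖z‖ = 1) : z ∈ Sector θ ↔ Real.cos θ ≤ z.re := by
  have hz0 : z ≠ 0 := by intro h; simp [h] at hz
  have habs : ‖z‖ = 1 := hz
  have hre : z.re = Real.cos |z.arg| := by
    rw [Real.cos_abs, Complex.cos_arg hz0, habs, div_one]
  constructor
  · intro h
    rw [hre]
    exact Real.cos_le_cos_of_nonneg_of_le_pi (abs_nonneg _) hθπ h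
  · intro h
    by_contra h'
    have h'' : θ < |z.arg| := lt_of_not_ge h'
    have := Real.cos_lt_cos_of_nonneg_of_le_pi hθ0 (Complex.abs_arg_le_pi z) h''
    rw [← hre] at this
    linarith

/-- Let `A` be a closed densely defined operator in a Banach space
`X` and `κ_ρ` (`ρ > 0`) a group of isometries of `X` leaving `D(A)` invariant and
satisfying the dilation relation `λ - A = ρ² κ_ρ((λ/ρ²) - A)κ_ρ⁻¹`.  If the spectrum
of `A` is contained in `ℂ\S°_φ` for some `φ ∈ (0,π)`, then `-A` is sectorial of
angle `θ` for every `θ ∈ [0,φ)`: indeed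
`|λ|(λ-A)⁻¹ = κ_{√|λ|}((λ/|λ|)-A)⁻¹κ_{√|λ|}⁻¹` for `λ ∈ S_θ\{0}`, so that
`|λ|‖(λ-A)⁻¹‖ ≤ sup_{|μ|=1, μ∈S_θ}‖(μ-A)⁻¹‖ < ∞`. -/
theorem statement11
    {X : Type u} [NormedAddCommGroup X] [NormedSpace ℂ X] [CompleteSpace X]
    (A : X →ₗ.[ℂ] X)
    (hclosed : IsClosed (A.graph : Set (X × X)))
    (hdense : Dense (A.domain : Set X))
    (κ : ℝ → (X ≃ₗᵢ[ℂ] X))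
    -- κ_ρ leaves D(A) invariant:
    (hκdom : ∀ ρ : ℝ, 0 < ρ → ∀ u : X, u ∈ A.domain ↔ (κ ρ) u ∈ A.domain)
    -- the dilation relation λ - A = ρ² κ_ρ ((λ/ρ²) - A) κ_ρ⁻¹:
    (hrel : ∀ (ρ : ℝ), 0 < ρ → ∀ (lam : ℂ) (u : X) (hu : u ∈ A.domain)
        (hu' : (κ ρ).symm u ∈ A.domain),
        lam • u - A ⟨u, hu⟩ =
          ((ρ : ℂ) ^ 2) • (κ ρ)
            ((lam / (ρ : ℂ) ^ 2) • ((κ ρ).symm u) - A ⟨(κ ρ).symm u, hu'⟩))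
    (φ : ℝ) (hφ0 : 0 < φ) (hφπ : φ < Real.pi)
    -- the spectrum of A is contained in ℂ\S°_φ:
    (hspec : ∀ lam : ℂ, lam ≠ 0 → |lam.arg| < φ →
      ∃ Rl : X →L[ℂ] X, IsResolventAt' A lam Rl) :
    ∀ θ : ℝ, 0 ≤ θ → θ < φ →
      ∃ Rfam : ℂ → X →L[ℂ] X,
        -- -A is sectorial of angle θ:
        (∀ lam ∈ Sector θ, lam ≠ 0 → IsResolventAt' A lam (Rfam lam)) ∧
        -- the conjugation identity |λ|(λ-A)⁻¹ = κ_{√|λ|}((λ/|λ|)-A)⁻¹κ_{√|λ|}⁻¹: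
        (∀ lam ∈ Sector θ, lam ≠ 0 → ∀ R1 : X →L[ℂ] X,
          IsResolventAt' A (lam / (‖lam‖ : ℂ)) R1 → ∀ x : X,
            (‖lam‖ : ℂ) • Rfam lam x =
              (κ (Real.sqrt ‖lam‖)) (R1 ((κ (Real.sqrt ‖lam‖)).symm x))) ∧
        -- the uniform bound:
        BddAbove {r : ℝ | ∃ (μ : ℂ) (R1 : X →L[ℂ] X),
            μ ∈ Sector θ ∧ ‖μ‖ = 1 ∧ IsResolventAt' A μ R1 ∧ r = ‖R1‖} ∧
        (∀ lam ∈ Sector θ, lam ≠ 0 →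
          ‖lam‖ * ‖Rfam lam‖ ≤ sSup {r : ℝ | ∃ (μ : ℂ) (R1 : X →L[ℂ] X),
            μ ∈ Sector θ ∧ ‖μ‖ = 1 ∧ IsResolventAt' A μ R1 ∧ r = ‖R1‖}) := by
  intro θ hθ0 hθφ
  classical
  have hθπ : θ ≤ Real.pi := (hθφ.trans hφπ).le
  -- canonical resolvent
  set Rcan : ℂ → X →L[ℂ] X := fun μ =>
    if h : μ ≠ 0 ∧ |μ.arg| < φ then (hspec μ h.1 h.2).choose else 0 with hRcanDef
  have hRcan : ∀ μ : ℂ, μ ≠ 0 → |μ.arg| < φ → IsResolventAt' A μ (Rcan μ) := by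
    intro μ h1 h2
    have : Rcan μ = (hspec μ h1 h2).choose := dif_pos ⟨h1, h2⟩
    rw [this]
    exact (hspec μ h1 h2).choose_spec
  set S : Set ℝ := {r : ℝ | ∃ (μ : ℂ) (R1 : X →L[ℂ] X),
      μ ∈ Sector θ ∧ ‖μ‖ = 1 ∧ IsResolventAt' A μ R1 ∧ r = ‖R1‖} with hSdef
  -- boundedness of S via compactness
  set K : Set ℂ := {z : ℂ | ‖z‖ = 1 ∧ Real.cos θ ≤ z.re} with hKdef
  have hKcomp : IsCompact K := by
    have hKeq : K = Metric.sphere (0 : ℂ) 1 ∩ (Complex.re ⁻¹' Ici (Real.cos θ)) := by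
      ext z
      simp [hKdef, mem_sphere_zero_iff_norm, and_comm]
    rw [hKeq]
    exact (isCompact_sphere 0 1).inter_right (isClosed_Ici.preimage Complex.continuous_re)
  have hKres : ∀ i : K, IsResolventAt' A (i : ℂ) (Rcan i) := by
    intro i
    have h1 : (i : ℂ) ≠ 0 := by
      intro h
      have := i.2.1
      rw [h] at this
      simp at this
    have h2 : |(i : ℂ).arg| < φ := by
      have hmem : (i : ℂ) ∈ Sector θ := (mem_sector_iff_cos hθ0 hθπ i.2.1).mpr i.2.2
      exact lt_of_le_of_lt hmem hθφ
    exact hRcan _ h1 h2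
  have hcover : K ⊆ ⋃ i : K, Metric.ball (i : ℂ) ((2 * (‖Rcan i‖ + 1))⁻¹) := by
    intro z hz
    exact mem_iUnion.mpr ⟨⟨z, hz⟩, Metric.mem_ball_self (by positivity)⟩
  obtain ⟨t, ht⟩ := hKcomp.elim_finite_subcover
    (fun i : K => Metric.ball (i : ℂ) ((2 * (‖Rcan i‖ + 1))⁻¹))
    (fun i => Metric.isOpen_ball) hcover
  obtain ⟨M, hM⟩ := Finset.exists_le (t.image fun i : K => 2 * ‖Rcan (i : ℂ)‖)
  have hSbound : ∀ r ∈ S, r ≤ M := by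
    rintro r ⟨μ, R1, hμsec, hμ1, hμres, rfl⟩
    have hμK : μ ∈ K := ⟨hμ1, (mem_sector_iff_cos hθ0 hθπ hμ1).mp hμsec⟩
    obtain ⟨i, hit, hball⟩ := Set.mem_iUnion₂.mp (ht hμK)
    rw [Metric.mem_ball, dist_eq_norm] at hball
    have hpos : (0 : ℝ) < 2 * (‖Rcan (i : ℂ)‖ + 1) := by positivity
    have h2 : ‖μ - (i : ℂ)‖ * (2 * (‖Rcan (i : ℂ)‖ + 1)) < 1 := by
      rw [inv_eq_one_div] at hball
      exact (lt_div_iff₀ hpos).mp hball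
    have hd : ‖μ - (i : ℂ)‖ * ‖Rcan (i : ℂ)‖ ≤ 1 / 2 := by
      nlinarith [norm_nonneg (μ - (i : ℂ)), norm_nonneg (Rcan (i : ℂ))]
    have hle := resolvent_norm_le' (hKres i) hμres hd
    exact hle.trans (hM _ (Finset.mem_image_of_mem _ hit))
  have hbdd : BddAbove S := ⟨M, hSbound⟩
  -- the family
  refine ⟨fun lam => ((‖lam‖ : ℂ))⁻¹ • conjOp (κ (Real.sqrt ‖lam‖)) (Rcan (lam / (‖lam‖ : ℂ))),
    ?_, ?_, hbdd, ?_⟩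
  · -- resolvent property
    intro lam hsec hlam0
    have hn : 0 < ‖lam‖ := norm_pos_iff.mpr hlam0
    have hnc : ((‖lam‖ : ℝ) : ℂ) ≠ 0 := Complex.ofReal_ne_zero.mpr hn.ne'
    set μ : ℂ := lam / (‖lam‖ : ℂ) with hμdef
    have hμarg : μ.arg = lam.arg := by
      rw [hμdef, div_eq_inv_mul, ← Complex.ofReal_inv]
      exact Complex.arg_real_mul lam (inv_pos.mpr hn)
    have hμ0 : μ ≠ 0 := div_ne_zero hlam0 hnc
    have hR1 : IsResolventAt' A μ (Rcan μ) := by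
      refine hRcan μ hμ0 ?_
      rw [hμarg]
      exact lt_of_le_of_lt hsec hθφ
    set e : X ≃ₗᵢ[ℂ] X := κ (Real.sqrt ‖lam‖) with hedef
    have hρ : 0 < Real.sqrt ‖lam‖ := Real.sqrt_pos.mpr hn
    have hρ2 : ((Real.sqrt ‖lam‖ : ℝ) : ℂ) ^ 2 = ((‖lam‖ : ℝ) : ℂ) := by
      rw [← Complex.ofReal_pow, Real.sq_sqrt hn.le]
    have happly : ∀ z : X,
        (((‖lam‖ : ℂ))⁻¹ • conjOp e (Rcan μ)) z = ((‖lam‖ : ℂ))⁻¹ • e (Rcan μ (e.symm z)) :=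
      fun z => rfl
    constructor
    · intro x
      obtain ⟨hy, hyx⟩ := hR1.1 (e.symm x)
      set y : X := Rcan μ (e.symm x) with hydef
      have hu : e y ∈ A.domain := (hκdom _ hρ y).mp hy
      have hu' : e.symm (e y) ∈ A.domain := by rw [e.symm_apply_apply]; exact hy
      have hrel1 := hrel (Real.sqrt ‖lam‖) hρ lam (e y) hu hu'
      have hsub : (⟨e.symm (e y), hu'⟩ : A.domain) = ⟨y, hy⟩ :=
        Subtype.ext (e.symm_apply_apply y)
      rw [hsub, e.symm_apply_apply, hρ2, ← hμdef, hyx, e.apply_symm_apply] at hrel1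
      have hmem : (((‖lam‖ : ℂ))⁻¹ • conjOp e (Rcan μ)) x ∈ A.domain := by
        rw [happly]
        exact A.domain.smul_mem _ hu
      refine ⟨hmem, ?_⟩
      have hsub2 : (⟨(((‖lam‖ : ℂ))⁻¹ • conjOp e (Rcan μ)) x, hmem⟩ : A.domain)
          = ((‖lam‖ : ℂ))⁻¹ • (⟨e y, hu⟩ : A.domain) := Subtype.ext (happly x)
      rw [hsub2, A.map_smul, happly x, smul_comm lam (((‖lam‖ : ℂ))⁻¹) (e y), ← smul_sub,
        hrel1, smul_smul, inv_mul_cancel₀ hnc, one_smul]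
    · intro u
      have hv' : e.symm (u : X) ∈ A.domain :=
        (hκdom _ hρ (e.symm (u : X))).mpr (by rw [e.apply_symm_apply]; exact u.2)
      have hrel2 := hrel (Real.sqrt ‖lam‖) hρ lam (u : X) u.2 hv'
      rw [hρ2, ← hμdef] at hrel2
      have hAu : A u = A ⟨(u : X), u.2⟩ := by congr
      have h22 : Rcan μ (μ • e.symm (u : X) - A ⟨e.symm (u : X), hv'⟩) = e.symm (u : X) :=
        hR1.2 ⟨e.symm (u : X), hv'⟩
      rw [hAu, hrel2, happly, e.symm.map_smul, e.symm_apply_apply, (Rcan μ).map_smul, h22,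
        e.map_smul, smul_smul, inv_mul_cancel₀ hnc, one_smul, e.apply_symm_apply]
  · -- conjugation identity
    intro lam hsec hlam0 R1' hR1' x
    have hn : 0 < ‖lam‖ := norm_pos_iff.mpr hlam0
    have hnc : ((‖lam‖ : ℝ) : ℂ) ≠ 0 := Complex.ofReal_ne_zero.mpr hn.ne'
    set μ : ℂ := lam / (‖lam‖ : ℂ) with hμdef
    have hμarg : μ.arg = lam.arg := by
      rw [hμdef, div_eq_inv_mul, ← Complex.ofReal_inv]
      exact Complex.arg_real_mul lam (inv_pos.mpr hn)
    have hμ0 : μ ≠ 0 := div_ne_zero hlam0 hnc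
    have hR1 : IsResolventAt' A μ (Rcan μ) := by
      refine hRcan μ hμ0 ?_
      rw [hμarg]
      exact lt_of_le_of_lt hsec hθφ
    have huniq : R1' = Rcan μ := resolvent_unique' A μ hR1' hR1
    set e : X ≃ₗᵢ[ℂ] X := κ (Real.sqrt ‖lam‖) with hedef
    have happly : (((‖lam‖ : ℂ))⁻¹ • conjOp e (Rcan μ)) x = ((‖lam‖ : ℂ))⁻¹ • e (Rcan μ (e.symm x)) :=
      rfl
    rw [happly, huniq, smul_smul, mul_inv_cancel₀ hnc, one_smul]
  · -- the sup bound
    intro lam hsec hlam0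
    have hn : 0 < ‖lam‖ := norm_pos_iff.mpr hlam0
    have hnc : ((‖lam‖ : ℝ) : ℂ) ≠ 0 := Complex.ofReal_ne_zero.mpr hn.ne'
    set μ : ℂ := lam / (‖lam‖ : ℂ) with hμdef
    have hμarg : μ.arg = lam.arg := by
      rw [hμdef, div_eq_inv_mul, ← Complex.ofReal_inv]
      exact Complex.arg_real_mul lam (inv_pos.mpr hn)
    have hμ0 : μ ≠ 0 := div_ne_zero hlam0 hnc
    have hnr : ‖((‖lam‖ : ℝ) : ℂ)‖ = ‖lam‖ := by
      simp [abs_of_pos hn]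
    have hμ1 : ‖μ‖ = 1 := by
      rw [hμdef, norm_div, hnr, div_self hn.ne']
    have hR1 : IsResolventAt' A μ (Rcan μ) := by
      refine hRcan μ hμ0 ?_
      rw [hμarg]
      exact lt_of_le_of_lt hsec hθφ
    set e : X ≃ₗᵢ[ℂ] X := κ (Real.sqrt ‖lam‖) with hedef
    have hnorm : ‖lam‖ * ‖((‖lam‖ : ℂ))⁻¹ • conjOp e (Rcan μ)‖ ≤ ‖Rcan μ‖ := by
      rw [norm_smul ((‖lam‖ : ℂ))⁻¹ (conjOp e (Rcan μ)), norm_inv, hnr]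
      calc ‖lam‖ * (‖lam‖⁻¹ * ‖conjOp e (Rcan μ)‖) = ‖conjOp e (Rcan μ)‖ := by
            rw [← mul_assoc, mul_inv_cancel₀ hn.ne', one_mul]
        _ ≤ ‖Rcan μ‖ := norm_conjOp_le e (Rcan μ)
    have hmemS : ‖Rcan μ‖ ∈ S := by
      refine ⟨μ, Rcan μ, ?_, hμ1, hR1, rfl⟩
      show |μ.arg| ≤ θ
      rw [hμarg]
      exact hsec
    exact hnorm.trans (le_csSup hbdd hmemS)
end
end
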